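/- Let p, r ∈ (0,∞) and q, s ∈ (0,∞], and suppose p < 1 or p ≠ r. Then there is no doubling weight u on ℝ such that the Hilbert transform H is well defined on L^{p,q}(u) (for every f ∈ L^{p,q}(u) the principal-value limit defining Hf(x) exists for a.e. x) and satisfies ‖Hf‖_{L^{r,s}(u)} ≤ C ‖f‖_{L^{p,q}(u)} for all f ∈ L^{p,q}(u) and some constant C. -/

import Mathlib

open MeasureTheory Filter Topology
open scoped ENNReal NNReal

noncomputable section

/-- The `u`-measure of a set `E`, `u(E) = ∫_E u`, as an extended nonnegative real. -/
def wMeas (u : ℝ → ℝ) (E : Set ℝ) : ℝ≥0∞ := ∫⁻ x in E, ENNReal.ofReal (u x)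

/-- The `u`-measure of a set `E`, `u(E) = ∫_E u(x) dx`, as a real number. -/
def wInt (u : ℝ → ℝ) (E : Set ℝ) : ℝ := ∫ x in E, u x

/-- `W(r) = ∫_0^r w(s) ds`. -/
def Wf (w : ℝ → ℝ) (r : ℝ) : ℝ := ∫ t in Set.Ioo (0:ℝ) r, w t

/-- A weight on `ℝ`: a positive locally integrable function. -/
def IsWeight (u : ℝ → ℝ) : Prop :=
  (∀ x, 0 < u x) ∧ MeasureTheory.LocallyIntegrable u volume

/-- A weight on `(0,∞)`: positive there and locally integrable on `(0,r)` for every `r > 0`. -/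
def IsWeightOn (w : ℝ → ℝ) : Prop :=
  (∀ t, 0 < t → 0 < w t) ∧ ∀ r, 0 < r → MeasureTheory.IntegrableOn w (Set.Ioo (0:ℝ) r) volume

/-- Decreasing rearrangement (with respect to the weight `u`) of an `ℝ≥0∞`-valued function. -/
def rearrE (u : ℝ → ℝ) (g : ℝ → ℝ≥0∞) (t : ℝ) : ℝ≥0∞ :=
  sInf {s : ℝ≥0∞ | wMeas u {x | s < g x} ≤ ENNReal.ofReal t}

/-- Decreasing rearrangement `f*_u` of `f` with respect to the weight `u`. -/
def rearr (u f : ℝ → ℝ) (t : ℝ) : ℝ≥0∞ :=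
  rearrE u (fun x => ENNReal.ofReal |f x|) t

/-- The quasinorm of `Λ^p_u(w)` for `ℝ≥0∞`-valued functions. -/
def lorentzNormE (p : ℝ) (u w : ℝ → ℝ) (g : ℝ → ℝ≥0∞) : ℝ≥0∞ :=
  (∫⁻ t in Set.Ioi (0:ℝ), rearrE u g t ^ p * ENNReal.ofReal (w t)) ^ (1/p)

/-- The quasinorm of the weighted Lorentz space `Λ^p_u(w)`. -/
def lorentzNorm (p : ℝ) (u w f : ℝ → ℝ) : ℝ≥0∞ :=
  lorentzNormE p u w (fun x => ENNReal.ofReal |f x|)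

/-- The quasinorm of `Λ^{p,∞}_u(w)` for `ℝ≥0∞`-valued functions. -/
def weakLorentzNormE (p : ℝ) (u w : ℝ → ℝ) (g : ℝ → ℝ≥0∞) : ℝ≥0∞ :=
  ⨆ t ∈ Set.Ioi (0:ℝ), ENNReal.ofReal (Wf w t) ^ (1/p) * rearrE u g t

/-- The quasinorm of the weak weighted Lorentz space `Λ^{p,∞}_u(w)`. -/
def weakLorentzNorm (p : ℝ) (u w f : ℝ → ℝ) : ℝ≥0∞ :=
  weakLorentzNormE p u w (fun x => ENNReal.ofReal |f x|)

/-- Membership in `Λ^p_u(w)`. -/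
def MemLambda (p : ℝ) (u w f : ℝ → ℝ) : Prop :=
  Measurable f ∧ lorentzNorm p u w f < ∞

/-- The quasinorm of the Lorentz space `L^{p,q}(u)`, `0 < q ≤ ∞`. -/
def lpqNorm (p : ℝ) (q : ℝ≥0∞) (u f : ℝ → ℝ) : ℝ≥0∞ :=
  if q = ∞ then ⨆ t ∈ Set.Ioi (0:ℝ), ENNReal.ofReal t ^ (1/p) * rearr u f t
  else (∫⁻ t in Set.Ioi (0:ℝ),
      (ENNReal.ofReal t ^ (1/p) * rearr u f t) ^ q.toReal / ENNReal.ofReal t) ^ (1/q.toReal)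

/-- Membership in `L^{p,q}(u)`. -/
def MemLpq (p : ℝ) (q : ℝ≥0∞) (u f : ℝ → ℝ) : Prop :=
  Measurable f ∧ lpqNorm p q u f < ∞

/-- The associate norm `‖g‖_{(Λ^p_u(w))'}`. -/
def assocNorm (p : ℝ) (u w g : ℝ → ℝ) : ℝ≥0∞ :=
  ⨆ (f : ℝ → ℝ) (_ : MemLambda p u w f) (_ : lorentzNorm p u w f ≠ 0),
    ENNReal.ofReal |∫ x, f x * g x * u x| / lorentzNorm p u w f

/-- The truncated Hilbert integral `∫_{|x−y|>ε} f(y)/(x−y) dy`. -/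
def pvIntegral (f : ℝ → ℝ) (x ε : ℝ) : ℝ :=
  ∫ y in {y : ℝ | ε < |x - y|}, f y / (x - y)

/-- The principal value limit defining `Hf(x)` exists and equals `L`. -/
def HasHilbert (f : ℝ → ℝ) (x L : ℝ) : Prop :=
  Filter.Tendsto (fun ε : ℝ => (1 / Real.pi) * pvIntegral f x ε) (𝓝[>] 0) (𝓝 L)

/-- The Hilbert transform `Hf(x)` (junk value where the principal value does not exist). -/
def hilbert (f : ℝ → ℝ) (x : ℝ) : ℝ :=
  limUnder (𝓝[>] (0:ℝ)) (fun ε => (1 / Real.pi) * pvIntegral f x ε)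

/-- The Hilbert maximal operator `H*f(x)`. -/
def hilbertMax (f : ℝ → ℝ) (x : ℝ) : ℝ≥0∞ :=
  ⨆ ε ∈ Set.Ioi (0:ℝ), ENNReal.ofReal ((1 / Real.pi) * |pvIntegral f x ε|)

/-- The Hardy–Littlewood maximal operator over intervals of `ℝ`. -/
def maxOp (u : ℝ → ℝ) (x : ℝ) : ℝ≥0∞ :=
  ⨆ (a : ℝ) (b : ℝ) (_ : x ∈ Set.Ioo a b),
    (∫⁻ y in Set.Ioo a b, ENNReal.ofReal |u y|) / ENNReal.ofReal (b - a)

/-- The Muckenhoupt class `A_1`: `Mu ≤ C u` a.e. -/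
def A1 (u : ℝ → ℝ) : Prop :=
  ∃ C : ℝ, 0 < C ∧ ∀ᵐ x : ℝ ∂volume, maxOp u x ≤ ENNReal.ofReal (C * u x)

/-- The Muckenhoupt class `A_p`, `p > 1`. -/
def Ap (p : ℝ) (u : ℝ → ℝ) : Prop :=
  ∃ C : ℝ, 0 < C ∧ ∀ a b : ℝ, a < b →
    ((∫⁻ x in Set.Ioo a b, ENNReal.ofReal (u x)) / ENNReal.ofReal (b - a)) *
      ((∫⁻ x in Set.Ioo a b, ENNReal.ofReal (u x ^ (-1 / (p - 1)))) /
        ENNReal.ofReal (b - a)) ^ (p - 1)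
      ≤ ENNReal.ofReal C

/-- The class `B_p`: `∫_r^∞ (r/t)^p w(t) dt ≤ C W(r)`. -/
def Bp (p : ℝ) (w : ℝ → ℝ) : Prop :=
  ∃ C : ℝ, 0 < C ∧ ∀ r : ℝ, 0 < r →
    (∫⁻ t in Set.Ioi r, ENNReal.ofReal ((r / t) ^ p * w t)) ≤ ENNReal.ofReal (C * Wf w r)

/-- The class `B_{p,∞}`: the Hardy operator maps `L^p_dec(w)` to `L^{p,∞}(w)`. -/
def BpInfty (p : ℝ) (w : ℝ → ℝ) : Prop :=
  ∃ C : ℝ, 0 < C ∧ ∀ f : ℝ → ℝ, (∀ t, 0 < t → 0 ≤ f t) → AntitoneOn f (Set.Ioi 0) →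
    ∀ t : ℝ, 0 < t →
      ENNReal.ofReal (Wf w t) ^ (1/p) *
          ((∫⁻ s in Set.Ioo (0:ℝ) t, ENNReal.ofReal (f s)) / ENNReal.ofReal t)
        ≤ ENNReal.ofReal C *
            (∫⁻ s in Set.Ioi (0:ℝ), ENNReal.ofReal (f s) ^ p * ENNReal.ofReal (w s)) ^ (1/p)

/-- The class `B*_∞`: `∫_0^r W(t)/t dt ≤ C W(r)`. -/
def BstarInfty (w : ℝ → ℝ) : Prop :=
  ∃ C : ℝ, 0 < C ∧ ∀ r : ℝ, 0 < r →
    (∫⁻ t in Set.Ioo (0:ℝ) r, ENNReal.ofReal (Wf w t / t)) ≤ ENNReal.ofReal (C * Wf w r)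

/-- The `Δ_2` condition: `W(2r) ≤ C W(r)`. -/
def Delta2 (w : ℝ → ℝ) : Prop :=
  ∃ C : ℝ, 0 < C ∧ ∀ r : ℝ, 0 < r → Wf w (2 * r) ≤ C * Wf w r

/-- A doubling weight on `ℝ`: `u(2I) ≤ C u(I)` for every bounded interval `I`. -/
def DoublingWeight (u : ℝ → ℝ) : Prop :=
  ∃ C : ℝ, 0 < C ∧ ∀ c r : ℝ, 0 < r →
    wInt u (Set.Ioo (c - 2*r) (c + 2*r)) ≤ C * wInt u (Set.Ioo (c - r) (c + r))

/-- `φ_I(t) = sup{|E| : E ⊆ I, u(E) = t}` for `I = (a,b)`. -/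
def phiI (u : ℝ → ℝ) (a b t : ℝ) : ℝ :=
  sSup {m : ℝ | ∃ E : Set ℝ, MeasurableSet E ∧ E ⊆ Set.Ioo a b ∧
    wInt u E = t ∧ (volume E).toReal = m}

/-- The index `p_w`:  `inf{p > 0 : t^p/W(t) ∈ L^{p'-1}((0,1), dt/t)}`, where for `p ≤ 1`
(`p' = ∞`) the condition means essential boundedness on `(0,1)`. -/
def pwIndex (w : ℝ → ℝ) : ℝ :=
  sInf {p : ℝ | 0 < p ∧
    ((p ≤ 1 ∧ ∃ C : ℝ, ∀ᵐ t ∂(volume.restrict (Set.Ioo (0:ℝ) 1)), t ^ p / Wf w t ≤ C) ∨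
     (1 < p ∧ (∫⁻ t in Set.Ioo (0:ℝ) 1,
        ENNReal.ofReal ((t ^ p / Wf w t) ^ (1 / (p - 1)) / t)) < ∞))}

section Aux
variable {u : ℝ → ℝ}

lemma wInt_integrableOn (hu : MeasureTheory.LocallyIntegrable u volume) (a b : ℝ) :
    IntegrableOn u (Set.Ioo a b) volume :=
  (hu.integrableOn_isCompact isCompact_Icc).mono_set Set.Ioo_subset_Icc_self

lemma wInt_pos (hpos : ∀ x, 0 < u x) (hu : MeasureTheory.LocallyIntegrable u volume)
    {a b : ℝ} (hab : a < b) : 0 < wInt u (Set.Ioo a b) := by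
  rw [wInt, setIntegral_pos_iff_support_of_nonneg_ae
    (Filter.Eventually.of_forall (fun x => (hpos x).le)) (wInt_integrableOn hu a b)]
  have hsupp : Function.support u = Set.univ := by
    ext x; simp [Function.support, (hpos x).ne']
  rw [hsupp]
  simp [Set.univ_inter, Real.volume_Ioo, hab]

lemma wMeas_eq_ofReal (hpos : ∀ x, 0 ≤ u x) {E : Set ℝ} (hu : IntegrableOn u E volume) :
    wMeas u E = ENNReal.ofReal (wInt u E) := by
  rw [wMeas, wInt, MeasureTheory.ofReal_integral_eq_lintegral_ofReal hu
    (Filter.Eventually.of_forall (fun x => hpos x))]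

lemma wMeas_mono (u : ℝ → ℝ) {E F : Set ℝ} (h : E ⊆ F) : wMeas u E ≤ wMeas u F :=
  lintegral_mono_set h

lemma wInt_mono (hpos : ∀ x, 0 ≤ u x) {E F : Set ℝ} (h : E ⊆ F)
    (hu : IntegrableOn u F volume) : wInt u E ≤ wInt u F :=
  setIntegral_mono_set hu (Filter.Eventually.of_forall hpos)
    (HasSubset.Subset.eventuallyLE h)

end Aux

section Hilbert

lemma intOn (α β x : ℝ) (hx : β < x) :
    IntegrableOn (fun y => (x - y)⁻¹) (Set.Ioo α β) volume := by
  rcases le_or_gt β α with h | h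
  · rw [Set.Ioo_eq_empty (by intro hh; exact absurd h (not_le.2 hh))]
    exact integrableOn_empty
  have hc : ContinuousOn (fun y => (x - y)⁻¹) (Set.Icc α β) := by
    apply ContinuousOn.inv₀ (by fun_prop)
    intro y hy
    nlinarith [hy.2]
  exact (hc.integrableOn_compact isCompact_Icc).mono_set Set.Ioo_subset_Icc_self

lemma pv_eq (α β x ε : ℝ) (hx : β < x) (hε : 0 < ε) (hεx : ε < x - β) :
    pvIntegral ((Set.Ioo α β).indicator 1) x ε = ∫ y in Set.Ioo α β, (x - y)⁻¹ := by
  rw [pvIntegral]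
  have h1 : ∀ y : ℝ, (Set.Ioo α β).indicator (1 : ℝ → ℝ) y / (x - y)
      = (Set.Ioo α β).indicator (fun y => (x - y)⁻¹) y := by
    intro y
    by_cases hy : y ∈ Set.Ioo α β
    · simp [Set.indicator_of_mem hy, one_div]
    · simp [Set.indicator_of_notMem hy]
  simp_rw [h1]
  rw [setIntegral_indicator measurableSet_Ioo]
  have hsub : {y : ℝ | ε < |x - y|} ∩ Set.Ioo α β = Set.Ioo α β := by
    rw [Set.inter_eq_right]
    intro y hy
    simp only [Set.mem_setOf_eq]
    rw [abs_of_pos (by linarith [hy.2])]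
    linarith [hy.2]
  rw [hsub]

lemma hilbert_ind (α β x : ℝ) (hx : β < x) :
    hilbert ((Set.Ioo α β).indicator 1) x
      = (1 / Real.pi) * ∫ y in Set.Ioo α β, (x - y)⁻¹ := by
  apply Filter.Tendsto.limUnder_eq
  apply Filter.Tendsto.congr' _ tendsto_const_nhds
  filter_upwards [Ioo_mem_nhdsGT_of_mem (⟨le_refl 0, sub_pos.2 hx⟩ :
    (0:ℝ) ∈ Set.Ico 0 (x - β))] with ε hε
  rw [pv_eq α β x ε hx hε.1 hε.2]

lemma int_lb (α β x D : ℝ) (hab : α < β) (hx : β < x)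
    (h : ∀ y ∈ Set.Ioo α β, 0 < x - y ∧ x - y ≤ D) :
    (β - α) / D ≤ ∫ y in Set.Ioo α β, (x - y)⁻¹ := by
  have key := MeasureTheory.setIntegral_ge_of_const_le (c := D⁻¹) measurableSet_Ioo
    (by simp [Real.volume_Ioo]) (fun y hy => by
      have h2 := h y hy
      exact inv_anti₀ h2.1 h2.2) (intOn α β x hx)
  rw [Real.volume_real_Ioo, max_eq_left (by linarith), smul_eq_mul, mul_comm] at key
  calc (β - α) / D = D⁻¹ * (β - α) := by ring
  _ ≤ _ := key

end Hilbert

section Rearr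

lemma rearr_le_one (u f : ℝ → ℝ) (t : ℝ) (hf : ∀ x, |f x| ≤ 1) : rearr u f t ≤ 1 := by
  apply sInf_le
  have h1 : {x : ℝ | (1:ℝ≥0∞) < ENNReal.ofReal |f x|} = ∅ := by
    ext x
    simp only [Set.mem_setOf_eq, Set.mem_empty_iff_false, iff_false, not_lt]
    exact ENNReal.ofReal_le_one.2 (hf x)
  simp only [Set.mem_setOf_eq, h1, wMeas]
  simp

lemma rearr_eq_zero (u f : ℝ → ℝ) (t : ℝ)
    (h : wMeas u {x | 0 < |f x|} ≤ ENNReal.ofReal t) : rearr u f t = 0 := by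
  apply le_antisymm _ zero_le
  apply sInf_le
  have h1 : {x : ℝ | (0:ℝ≥0∞) < ENNReal.ofReal |f x|} = {x | 0 < |f x|} := by
    ext x; simp [ENNReal.ofReal_pos]
  simp only [Set.mem_setOf_eq]
  rw [h1]
  exact h

lemma le_rearr (u f : ℝ → ℝ) (t c0 : ℝ) (S : Set ℝ) (hS : ∀ x ∈ S, c0 ≤ |f x|)
    (ht : ENNReal.ofReal t < wMeas u S) : ENNReal.ofReal c0 ≤ rearr u f t := by
  apply le_sInf
  intro b hb
  by_contra hbc
  push_neg at hbc
  apply absurd hb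
  simp only [Set.mem_setOf_eq, not_le]
  refine lt_of_lt_of_le ht (wMeas_mono u ?_)
  intro x hx
  exact lt_of_lt_of_le hbc (by simpa using ENNReal.ofReal_le_ofReal (hS x hx))

end Rearr

section RpowInt

lemma lint_rpow (M c γ : ℝ) (hM : 0 ≤ M) (hγ : 0 < γ) (hc : 0 ≤ c) :
    ∫⁻ t in Set.Ioo (0:ℝ) M, ENNReal.ofReal (c * t ^ (γ - 1))
      = ENNReal.ofReal (c * M ^ γ / γ) := by
  have hint : IntegrableOn (fun t : ℝ => c * t ^ (γ - 1)) (Set.Ioo 0 M) volume := by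
    apply Integrable.const_mul
    have h : IntervalIntegrable (fun t : ℝ => t ^ (γ-1)) volume 0 M :=
      intervalIntegral.intervalIntegrable_rpow' (by linarith)
    rw [intervalIntegrable_iff_integrableOn_Ioo_of_le hM] at h
    exact h
  rw [← MeasureTheory.ofReal_integral_eq_lintegral_ofReal hint]
  · congr 1
    rw [← MeasureTheory.integral_Ioc_eq_integral_Ioo, ← intervalIntegral.integral_of_le hM,
      intervalIntegral.integral_const_mul, integral_rpow (Or.inl (by linarith))]
    rw [Real.zero_rpow (by linarith : γ - 1 + 1 ≠ 0)]
    rw [show γ - 1 + 1 = γ by ring]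
    ring
  · filter_upwards [ae_restrict_mem measurableSet_Ioo] with t ht
    exact mul_nonneg hc (Real.rpow_nonneg ht.1.le _)

lemma point_id (t c a b : ℝ) (ht : 0 < t) (hc : 0 < c) (hb : 0 ≤ b) :
    (ENNReal.ofReal t ^ a * ENNReal.ofReal c) ^ b / ENNReal.ofReal t
      = ENNReal.ofReal (c ^ b * t ^ (a * b - 1)) := by
  rw [ENNReal.ofReal_rpow_of_pos ht, ← ENNReal.ofReal_mul (Real.rpow_nonneg ht.le _),
    ENNReal.ofReal_rpow_of_pos (by positivity), ← ENNReal.ofReal_div_of_pos ht]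
  congr 1
  rw [Real.mul_rpow (Real.rpow_nonneg ht.le _) hc.le, ← Real.rpow_mul ht.le]
  rw [Real.rpow_sub ht, Real.rpow_one]
  ring

end RpowInt

section NormBounds

lemma lpq_upper (p : ℝ) (q : ℝ≥0∞) (hp : 0 < p) (hq : 0 < q) (u f : ℝ → ℝ)
    (M' : ℝ) (hM' : 0 ≤ M') (hf1 : ∀ x, |f x| ≤ 1)
    (hf0 : wMeas u {x | 0 < |f x|} ≤ ENNReal.ofReal M') :
    lpqNorm p q u f ≤
      ENNReal.ofReal ((if q = ∞ then 1 else (p / q.toReal) ^ (1/q.toReal)) * M' ^ (1/p)) := by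
  by_cases hqt : q = ∞
  · rw [lpqNorm, if_pos hqt, if_pos hqt, one_mul]
    apply iSup₂_le
    intro t ht
    rcases lt_or_ge t M' with h | h
    · calc ENNReal.ofReal t ^ (1/p) * rearr u f t
          ≤ ENNReal.ofReal t ^ (1/p) * 1 := by
            exact mul_le_mul_right (rearr_le_one u f t hf1) _
      _ = ENNReal.ofReal (t ^ (1/p)) := by
            rw [mul_one, ENNReal.ofReal_rpow_of_pos ht]
      _ ≤ ENNReal.ofReal (M' ^ (1/p)) := by
            exact ENNReal.ofReal_le_ofReal
              (Real.rpow_le_rpow (le_of_lt ht) h.le (by positivity))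
    · have hz : rearr u f t = 0 :=
        rearr_eq_zero u f t (hf0.trans (ENNReal.ofReal_le_ofReal h))
      simp [hz]
  · rw [lpqNorm, if_neg hqt, if_neg hqt]
    have hqR : 0 < q.toReal := ENNReal.toReal_pos hq.ne' hqt
    set γ : ℝ := (1/p) * q.toReal with hγdef
    have hγ : 0 < γ := by positivity
    have hbound : ∀ t ∈ Set.Ioi (0:ℝ),
        (ENNReal.ofReal t ^ (1/p) * rearr u f t) ^ q.toReal / ENNReal.ofReal t
          ≤ (Set.Ioo (0:ℝ) M').indicator
              (fun t => ENNReal.ofReal ((1:ℝ) ^ q.toReal * t ^ (γ - 1))) t := by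
      intro t ht
      rcases lt_or_ge t M' with h | h
      · rw [Set.indicator_of_mem (Set.mem_Ioo.mpr ⟨ht, h⟩)]
        calc (ENNReal.ofReal t ^ (1/p) * rearr u f t) ^ q.toReal / ENNReal.ofReal t
            ≤ (ENNReal.ofReal t ^ (1/p) * ENNReal.ofReal 1) ^ q.toReal / ENNReal.ofReal t := by
              gcongr
              · exact le_trans (rearr_le_one u f t hf1) (by simp)
        _ = ENNReal.ofReal ((1:ℝ) ^ q.toReal * t ^ ((1/p) * q.toReal - 1)) :=
              point_id t 1 (1/p) q.toReal ht one_pos hqR.le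
      · have hz : rearr u f t = 0 :=
          rearr_eq_zero u f t (hf0.trans (ENNReal.ofReal_le_ofReal h))
        rw [hz, mul_zero, ENNReal.zero_rpow_of_pos hqR, ENNReal.zero_div]
        exact zero_le
    calc (∫⁻ t in Set.Ioi (0:ℝ),
            (ENNReal.ofReal t ^ (1/p) * rearr u f t) ^ q.toReal / ENNReal.ofReal t) ^ (1/q.toReal)
        ≤ (∫⁻ t in Set.Ioi (0:ℝ), (Set.Ioo (0:ℝ) M').indicator
              (fun t => ENNReal.ofReal ((1:ℝ) ^ q.toReal * t ^ (γ - 1))) t) ^ (1/q.toReal) := by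
          apply ENNReal.rpow_le_rpow _ (by positivity)
          apply MeasureTheory.lintegral_mono_ae
          filter_upwards [ae_restrict_mem measurableSet_Ioi] with t ht
          exact hbound t ht
    _ = (∫⁻ t in Set.Ioo (0:ℝ) M',
            ENNReal.ofReal ((1:ℝ) ^ q.toReal * t ^ (γ - 1))) ^ (1/q.toReal) := by
          congr 1
          rw [MeasureTheory.lintegral_indicator measurableSet_Ioo,
            MeasureTheory.Measure.restrict_restrict measurableSet_Ioo,
            Set.inter_eq_left.mpr (fun x hx => hx.1)]
    _ = (ENNReal.ofReal ((1:ℝ) ^ q.toReal * M' ^ γ / γ)) ^ (1/q.toReal) := by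
          rw [lint_rpow M' ((1:ℝ) ^ q.toReal) γ hM' hγ (by positivity)]
    _ ≤ ENNReal.ofReal ((p / q.toReal) ^ (1/q.toReal) * M' ^ (1/p)) := by
          rw [ENNReal.ofReal_rpow_of_nonneg (by positivity) (by positivity)]
          apply ENNReal.ofReal_le_ofReal
          have h1 : γ * (1/q.toReal) = 1/p := by
            rw [hγdef]; field_simp
          have h2 : γ⁻¹ = p / q.toReal := by
            rw [hγdef]; field_simp
          rw [Real.one_rpow, one_mul, div_eq_mul_inv,
            Real.mul_rpow (by positivity) (by positivity), ← Real.rpow_mul hM', h1, h2,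
            mul_comm]

end NormBounds

lemma lpq_lower (r : ℝ) (s : ℝ≥0∞) (hr : 0 < r) (hs : 0 < s) (u h : ℝ → ℝ)
    (c0 W' : ℝ) (hc0 : 0 < c0) (hW' : 0 < W') (S : Set ℝ)
    (hhS : ∀ x ∈ S, c0 ≤ |h x|) (hWS : ENNReal.ofReal W' ≤ wMeas u S) :
    ENNReal.ofReal ((if s = ∞ then ((1:ℝ)/2) ^ (1/r) else (r / s.toReal) ^ (1/s.toReal))
        * c0 * W' ^ (1/r)) ≤ lpqNorm r s u h := by
  have hre : ∀ t : ℝ, 0 < t → t < W' → ENNReal.ofReal c0 ≤ rearr u h t := by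
    intro t ht htW
    exact le_rearr u h t c0 S hhS (lt_of_lt_of_le (ENNReal.ofReal_lt_ofReal_iff hW' |>.2 htW) hWS)
  by_cases hst : s = ∞
  · rw [lpqNorm, if_pos hst, if_pos hst]
    have ht0 : (W'/2 : ℝ) ∈ Set.Ioi (0:ℝ) := by simp; linarith
    apply le_trans _ (le_iSup₂_of_le (W'/2) ht0 (le_refl _))
    calc ENNReal.ofReal ((1/2:ℝ) ^ (1/r) * c0 * W' ^ (1/r))
        = ENNReal.ofReal ((W'/2) ^ (1/r)) * ENNReal.ofReal c0 := by
          rw [← ENNReal.ofReal_mul (by positivity)]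
          congr 1
          rw [show (W'/2 : ℝ) = (1/2) * W' by ring,
            Real.mul_rpow (by norm_num) hW'.le]
          ring
    _ ≤ ENNReal.ofReal (W'/2) ^ (1/r) * rearr u h (W'/2) := by
          gcongr
          · rw [ENNReal.ofReal_rpow_of_pos (by linarith)]
          · exact hre _ (by linarith) (by linarith)
  · rw [lpqNorm, if_neg hst, if_neg hst]
    have hsR : 0 < s.toReal := ENNReal.toReal_pos hs.ne' hst
    set γ : ℝ := (1/r) * s.toReal with hγdef
    have hγ : 0 < γ := by positivity
    calc ENNReal.ofReal ((r / s.toReal) ^ (1/s.toReal) * c0 * W' ^ (1/r))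
        = (ENNReal.ofReal (c0 ^ s.toReal * W' ^ γ / γ)) ^ (1/s.toReal) := by
          rw [ENNReal.ofReal_rpow_of_nonneg (by positivity) (by positivity)]
          congr 1
          have h2 : (γ⁻¹ : ℝ) = r / s.toReal := by rw [hγdef]; field_simp
          rw [show c0 ^ s.toReal * W' ^ γ / γ = c0 ^ s.toReal * W' ^ γ * γ⁻¹ from by ring,
            Real.mul_rpow (by positivity) (by positivity),
            Real.mul_rpow (by positivity) (by positivity),
            ← Real.rpow_mul hc0.le, mul_one_div, div_self hsR.ne', Real.rpow_one,
            ← Real.rpow_mul hW'.le,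
            show γ * (1/s.toReal) = 1/r from by rw [hγdef]; field_simp, h2]
          ring
    _ ≤ (∫⁻ t in Set.Ioo (0:ℝ) W',
            (ENNReal.ofReal t ^ (1/r) * rearr u h t) ^ s.toReal / ENNReal.ofReal t) ^ (1/s.toReal) := by
          apply ENNReal.rpow_le_rpow _ (by positivity)
          rw [← lint_rpow W' (c0 ^ s.toReal) γ hW'.le hγ (by positivity)]
          apply MeasureTheory.lintegral_mono_ae
          filter_upwards [ae_restrict_mem measurableSet_Ioo] with t ht
          calc ENNReal.ofReal (c0 ^ s.toReal * t ^ (γ - 1))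
              = (ENNReal.ofReal t ^ (1/r) * ENNReal.ofReal c0) ^ s.toReal / ENNReal.ofReal t := by
                rw [point_id t c0 (1/r) s.toReal ht.1 hc0 hsR.le]
          _ ≤ _ := by
                gcongr
                exact hre t ht.1 ht.2
    _ ≤ (∫⁻ t in Set.Ioi (0:ℝ),
            (ENNReal.ofReal t ^ (1/r) * rearr u h t) ^ s.toReal / ENNReal.ofReal t) ^ (1/s.toReal) := by
          apply ENNReal.rpow_le_rpow _ (by positivity)
          exact lintegral_mono_set (fun x hx => hx.1)

section Master

lemma alg_step (Bs c0 X C Aq Y π0 L E : ℝ) (hBs : 0 < Bs) (hπ : 0 < π0) (hL : 0 < L)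
    (hX : 0 ≤ X) (hY : 0 ≤ Y) (hCA : 0 ≤ C * (Aq * Y))
    (hineq : Bs * c0 * X ≤ C * (Aq * Y)) (hc0 : c0 = E / (π0 * (2*L))) :
    E * X ≤ (C * Aq * 2 * π0 / Bs) * L * Y := by
  have hE : E = c0 * (π0 * 2 * L) := by
    rw [hc0, show π0 * 2 * L = π0 * (2 * L) by ring, div_mul_cancel₀ E (by positivity : (π0 * (2*L)) ≠ 0)]
  calc E * X = (π0 * 2 * L / Bs) * (Bs * c0 * X) := by
        rw [hE]; field_simp
  _ ≤ (π0 * 2 * L / Bs) * (C * (Aq * Y)) := by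
        apply mul_le_mul_of_nonneg_left hineq (by positivity)
  _ = (C * Aq * 2 * π0 / Bs) * L * Y := by
        field_simp

lemma master (p r : ℝ) (q s : ℝ≥0∞) (hp : 0 < p) (hr : 0 < r) (hq : 0 < q) (hs : 0 < s)
    (u : ℝ → ℝ) (hupos : ∀ x, 0 < u x) (huloc : MeasureTheory.LocallyIntegrable u volume)
    (C : ℝ) (hC : 0 < C)
    (hbd : ∀ f : ℝ → ℝ, MemLpq p q u f →
      lpqNorm r s u (hilbert f) ≤ ENNReal.ofReal C * lpqNorm p q u f) :
    ∃ K : ℝ, 0 < K ∧ ∀ a b α β : ℝ, a ≤ α → α < β → β ≤ b →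
      (β - α) * (wInt u (Set.Ioo b (2*b - a))) ^ (1/r)
        ≤ K * (b - a) * (wInt u (Set.Ioo α β)) ^ (1/p) := by
  set Aq : ℝ := if q = ∞ then 1 else (p / q.toReal) ^ (1/q.toReal) with hAqdef
  set Bs : ℝ := if s = ∞ then ((1:ℝ)/2) ^ (1/r) else (r / s.toReal) ^ (1/s.toReal) with hBsdef
  have hAq : 0 < Aq := by
    rw [hAqdef]
    split
    · norm_num
    · have : 0 < q.toReal := ENNReal.toReal_pos hq.ne' (by assumption)
      positivity
  have hBs : 0 < Bs := by
    rw [hBsdef]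
    split
    · positivity
    · have : 0 < s.toReal := ENNReal.toReal_pos hs.ne' (by assumption)
      positivity
  refine ⟨C * Aq * 2 * Real.pi / Bs, by positivity, ?_⟩
  intro a b α β haα hαβ hβb
  have hab : a < b := lt_of_le_of_lt haα (lt_of_lt_of_le hαβ hβb)
  have hπ := Real.pi_pos
  set f : ℝ → ℝ := (Set.Ioo α β).indicator 1 with hfdef
  set M' : ℝ := wInt u (Set.Ioo α β) with hM'def
  have hM' : 0 < M' := wInt_pos hupos huloc hαβ
  have hMeq : wMeas u (Set.Ioo α β) = ENNReal.ofReal M' :=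
    wMeas_eq_ofReal (fun x => (hupos x).le) (wInt_integrableOn huloc α β)
  have hf1 : ∀ x, |f x| ≤ 1 := by
    intro x
    rw [hfdef]
    by_cases hx : x ∈ Set.Ioo α β
    · simp [Set.indicator_of_mem hx]
    · simp [Set.indicator_of_notMem hx]
  have hsupp : {x : ℝ | 0 < |f x|} = Set.Ioo α β := by
    ext x
    by_cases hx : x ∈ Set.Ioo α β
    · simp only [Set.mem_setOf_eq, hfdef, Set.indicator_of_mem hx, Pi.one_apply, abs_one]
      simp [hx]
    · simp only [Set.mem_setOf_eq, hfdef, Set.indicator_of_notMem hx, abs_zero]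
      simp [hx]
  have hupper : lpqNorm p q u f ≤ ENNReal.ofReal (Aq * M' ^ (1/p)) := by
    rw [hAqdef]
    exact lpq_upper p q hp hq u f M' hM'.le hf1 (by rw [hsupp, hMeq])
  have hmem : MemLpq p q u f := by
    refine ⟨(measurable_one (α := ℝ)).indicator measurableSet_Ioo, ?_⟩
    exact lt_of_le_of_lt hupper ENNReal.ofReal_lt_top
  -- the set S and the lower bound for the Hilbert transform there
  set S : Set ℝ := Set.Ioo b (2*b - a) with hSdef
  set W' : ℝ := wInt u S with hW'def
  have hbS : b < 2*b - a := by linarith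
  have hW' : 0 < W' := wInt_pos hupos huloc hbS
  have hWeq : wMeas u S = ENNReal.ofReal W' :=
    wMeas_eq_ofReal (fun x => (hupos x).le) (wInt_integrableOn huloc b (2*b - a))
  set c0 : ℝ := (β - α) / (Real.pi * (2 * (b - a))) with hc0def
  have hc0 : 0 < c0 := by
    rw [hc0def]
    exact div_pos (by linarith) (mul_pos hπ (by linarith))
  have hhilb : ∀ x ∈ S, c0 ≤ |hilbert f x| := by
    intro x hx
    have hβx : β < x := lt_of_le_of_lt hβb hx.1
    rw [hfdef, hilbert_ind α β x hβx]
    have hib := int_lb α β x (2*(b-a)) hαβ hβx (fun y hy => by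
      constructor
      · linarith [hy.2]
      · have := hx.2
        have := hy.1
        linarith)
    have hval : c0 ≤ (1 / Real.pi) * ∫ y in Set.Ioo α β, (x - y)⁻¹ := by
      rw [hc0def]
      calc (β - α) / (Real.pi * (2 * (b - a)))
          = (1 / Real.pi) * ((β - α) / (2*(b-a))) := by
            field_simp
      _ ≤ (1 / Real.pi) * ∫ y in Set.Ioo α β, (x - y)⁻¹ := by
            apply mul_le_mul_of_nonneg_left hib (by positivity)
    exact le_trans hval (le_abs_self _)
  have hlower : ENNReal.ofReal (Bs * c0 * W' ^ (1/r)) ≤ lpqNorm r s u (hilbert f) := by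
    rw [hBsdef]
    exact lpq_lower r s hr hs u (hilbert f) c0 W' hc0 hW' S hhilb (le_of_eq hWeq.symm)
  have hchain : ENNReal.ofReal (Bs * c0 * W' ^ (1/r))
      ≤ ENNReal.ofReal (C * (Aq * M' ^ (1/p))) := by
    rw [ENNReal.ofReal_mul hC.le]
    exact le_trans hlower (le_trans (hbd f hmem) (mul_le_mul_right hupper _))
  have hCA : 0 ≤ C * (Aq * M' ^ (1/p)) :=
    mul_nonneg hC.le (mul_nonneg hAq.le (Real.rpow_nonneg hM'.le _))
  have hreal : Bs * c0 * W' ^ (1/r) ≤ C * (Aq * M' ^ (1/p)) :=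
    (ENNReal.ofReal_le_ofReal_iff hCA).1 hchain
  exact alg_step Bs c0 (W' ^ (1/r)) C Aq (M' ^ (1/p)) Real.pi (b-a) (β-α) hBs hπ
    (by linarith) (Real.rpow_nonneg hW'.le _) (Real.rpow_nonneg hM'.le _) hCA hreal hc0def

end Master

section Geo
variable {u : ℝ → ℝ}

lemma locInt_intervalIntegrable (hu : MeasureTheory.LocallyIntegrable u volume) (a b : ℝ) :
    IntervalIntegrable u volume a b :=
  intervalIntegrable_iff.mpr
    ((hu.integrableOn_isCompact isCompact_uIcc).mono_set Set.uIoc_subset_uIcc)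

lemma wInt_eq_intervalIntegral (x y : ℝ) (hxy : x ≤ y) :
    wInt u (Set.Ioo x y) = ∫ t in x..y, u t := by
  rw [wInt, ← MeasureTheory.integral_Ioc_eq_integral_Ioo, intervalIntegral.integral_of_le hxy]

lemma wInt_split (hu : MeasureTheory.LocallyIntegrable u volume) (α m β : ℝ)
    (h1 : α ≤ m) (h2 : m ≤ β) :
    wInt u (Set.Ioo α β) = wInt u (Set.Ioo α m) + wInt u (Set.Ioo m β) := by
  rw [wInt_eq_intervalIntegral α β (le_trans h1 h2), wInt_eq_intervalIntegral α m h1,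
    wInt_eq_intervalIntegral m β h2,
    intervalIntegral.integral_add_adjacent_intervals
      (locInt_intervalIntegrable hu α m) (locInt_intervalIntegrable hu m β)]

lemma doubling_compare (hupos : ∀ x, 0 < u x) (huloc : MeasureTheory.LocallyIntegrable u volume)
    {Cd : ℝ} (hCd : 0 < Cd)
    (hd : ∀ c r : ℝ, 0 < r →
      wInt u (Set.Ioo (c - 2*r) (c + 2*r)) ≤ Cd * wInt u (Set.Ioo (c - r) (c + r)))
    {a b : ℝ} (hab : a < b) :
    wInt u (Set.Ioo a b) ≤ Cd^2 * wInt u (Set.Ioo b (2*b - a)) := by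
  have hρ : 0 < (b - a)/2 := by linarith
  have step1 := hd ((3*b - a)/2) (2*((b - a)/2)) (by linarith)
  have step2 := hd ((3*b - a)/2) ((b - a)/2) hρ
  rw [show (3*b - a)/2 - 2*(2*((b - a)/2)) = (3*a - b)/2 by ring,
    show (3*b - a)/2 + 2*(2*((b - a)/2)) = (7*b - 5*a)/2 by ring,
    show (3*b - a)/2 - 2*((b - a)/2) = (a + b)/2 by ring,
    show (3*b - a)/2 + 2*((b - a)/2) = (5*b - 3*a)/2 by ring] at step1
  rw [show (3*b - a)/2 - 2*((b - a)/2) = (a + b)/2 by ring,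
    show (3*b - a)/2 + 2*((b - a)/2) = (5*b - 3*a)/2 by ring,
    show (3*b - a)/2 - (b - a)/2 = b by ring,
    show (3*b - a)/2 + (b - a)/2 = 2*b - a by ring] at step2
  have hmono : wInt u (Set.Ioo a b) ≤ wInt u (Set.Ioo ((3*a - b)/2) ((7*b - 5*a)/2)) := by
    apply wInt_mono (fun x => (hupos x).le) _ (wInt_integrableOn huloc _ _)
    apply Set.Ioo_subset_Ioo (by linarith) (by linarith)
  calc wInt u (Set.Ioo a b) ≤ Cd * wInt u (Set.Ioo ((a+b)/2) ((5*b - 3*a)/2)) :=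
        le_trans hmono step1
  _ ≤ Cd * (Cd * wInt u (Set.Ioo b (2*b - a))) := by
        apply mul_le_mul_of_nonneg_left step2 hCd.le
  _ = Cd^2 * wInt u (Set.Ioo b (2*b - a)) := by ring

lemma reverse_doubling (hupos : ∀ x, 0 < u x) (huloc : MeasureTheory.LocallyIntegrable u volume)
    {Cd : ℝ} (hCd : 0 < Cd)
    (hd : ∀ c r : ℝ, 0 < r →
      wInt u (Set.Ioo (c - 2*r) (c + 2*r)) ≤ Cd * wInt u (Set.Ioo (c - r) (c + r)))
    {t : ℝ} (ht : 0 < t) :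
    (1 + Cd⁻¹^4) * wInt u (Set.Ioo (-t) t) ≤ wInt u (Set.Ioo (-(2*t)) (2*t)) := by
  have s1 := hd (7*t/4) (2*t) (by linarith)
  have s2 := hd (7*t/4) t ht
  have s3 := hd (7*t/4) (t/2) (by linarith)
  have s4 := hd (7*t/4) (t/4) (by linarith)
  rw [show 7*t/4 - 2*(2*t) = -(9*t)/4 by ring, show 7*t/4 + 2*(2*t) = 23*t/4 by ring,
    show 7*t/4 - 2*t = -t/4 by ring, show 7*t/4 + 2*t = 15*t/4 by ring] at s1
  rw [show 7*t/4 - 2*t = -t/4 by ring, show 7*t/4 + 2*t = 15*t/4 by ring,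
    show 7*t/4 - t = 3*t/4 by ring, show 7*t/4 + t = 11*t/4 by ring] at s2
  rw [show 7*t/4 - 2*(t/2) = 3*t/4 by ring, show 7*t/4 + 2*(t/2) = 11*t/4 by ring,
    show 7*t/4 - t/2 = 5*t/4 by ring, show 7*t/4 + t/2 = 9*t/4 by ring] at s3
  rw [show 7*t/4 - 2*(t/4) = 5*t/4 by ring, show 7*t/4 + 2*(t/4) = 9*t/4 by ring,
    show 7*t/4 - t/4 = 3*t/2 by ring, show 7*t/4 + t/4 = 2*t by ring] at s4
  have hmono : wInt u (Set.Ioo (-t) t) ≤ wInt u (Set.Ioo (-(9*t)/4) (23*t/4)) := by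
    apply wInt_mono (fun x => (hupos x).le) _ (wInt_integrableOn huloc _ _)
    apply Set.Ioo_subset_Ioo (by linarith) (by linarith)
  have hJ : wInt u (Set.Ioo (-t) t) ≤ Cd^4 * wInt u (Set.Ioo (3*t/2) (2*t)) := by
    calc wInt u (Set.Ioo (-t) t) ≤ Cd * wInt u (Set.Ioo (-t/4) (15*t/4)) :=
          le_trans hmono s1
    _ ≤ Cd * (Cd * wInt u (Set.Ioo (3*t/4) (11*t/4))) := mul_le_mul_of_nonneg_left s2 hCd.le
    _ ≤ Cd * (Cd * (Cd * wInt u (Set.Ioo (5*t/4) (9*t/4)))) := by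
          apply mul_le_mul_of_nonneg_left _ hCd.le
          exact mul_le_mul_of_nonneg_left s3 hCd.le
    _ ≤ Cd * (Cd * (Cd * (Cd * wInt u (Set.Ioo (3*t/2) (2*t))))) := by
          apply mul_le_mul_of_nonneg_left _ hCd.le
          apply mul_le_mul_of_nonneg_left _ hCd.le
          exact mul_le_mul_of_nonneg_left s4 hCd.le
    _ = Cd^4 * wInt u (Set.Ioo (3*t/2) (2*t)) := by ring
  have hJlb : Cd⁻¹^4 * wInt u (Set.Ioo (-t) t) ≤ wInt u (Set.Ioo (3*t/2) (2*t)) := by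
    rw [show Cd⁻¹^4 = (Cd^4)⁻¹ by rw [inv_pow]]
    rw [inv_mul_le_iff₀ (by positivity)]
    exact hJ
  have hdisj : Disjoint (Set.Ioo (-t) t) (Set.Ioo (3*t/2) (2*t)) := by
    rw [Set.disjoint_left]
    intro x hx1 hx2
    have := hx1.2
    have := hx2.1
    linarith
  have hunion := MeasureTheory.setIntegral_union hdisj measurableSet_Ioo
    (wInt_integrableOn huloc (-t) t) (wInt_integrableOn huloc (3*t/2) (2*t)) (f := u)
  have hsub : Set.Ioo (-t) t ∪ Set.Ioo (3*t/2) (2*t) ⊆ Set.Ioo (-(2*t)) (2*t) := by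
    intro x hx
    rcases hx with hx | hx
    · exact ⟨by linarith [hx.1], by linarith [hx.2]⟩
    · exact ⟨by linarith [hx.1], hx.2⟩
  calc (1 + Cd⁻¹^4) * wInt u (Set.Ioo (-t) t)
      = wInt u (Set.Ioo (-t) t) + Cd⁻¹^4 * wInt u (Set.Ioo (-t) t) := by ring
  _ ≤ wInt u (Set.Ioo (-t) t) + wInt u (Set.Ioo (3*t/2) (2*t)) := by linarith [hJlb]
  _ = ∫ x in (Set.Ioo (-t) t ∪ Set.Ioo (3*t/2) (2*t)), u x := hunion.symm
  _ ≤ wInt u (Set.Ioo (-(2*t)) (2*t)) := by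
      apply setIntegral_mono_set (wInt_integrableOn huloc _ _)
        (Filter.Eventually.of_forall (fun x => (hupos x).le))
        (HasSubset.Subset.eventuallyLE hsub)

end Geo

section Surj
variable {u : ℝ → ℝ}

lemma exists_symm_interval (hupos : ∀ x, 0 < u x)
    (huloc : MeasureTheory.LocallyIntegrable u volume)
    {Cd : ℝ} (hCd : 0 < Cd)
    (hd : ∀ c r : ℝ, 0 < r →
      wInt u (Set.Ioo (c - 2*r) (c + 2*r)) ≤ Cd * wInt u (Set.Ioo (c - r) (c + r)))
    (v : ℝ) (hv : 0 < v) :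
    ∃ t : ℝ, 0 < t ∧ wInt u (Set.Ioo (-t) t) = v := by
  set F : ℝ → ℝ := fun b => ∫ x in (0:ℝ)..b, u x with hFdef
  have hF : Continuous F :=
    intervalIntegral.continuous_primitive (fun a b => locInt_intervalIntegrable huloc a b) 0
  set G : ℝ → ℝ := fun t => F t - F (-t) with hGdef
  have hG : Continuous G := hF.sub (hF.comp continuous_neg)
  have hG0 : G 0 = 0 := by simp [hGdef]
  have hGh : ∀ t : ℝ, 0 ≤ t → G t = wInt u (Set.Ioo (-t) t) := by
    intro t ht
    rw [wInt_eq_intervalIntegral (-t) t (by linarith)]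
    rw [← intervalIntegral.integral_add_adjacent_intervals
      (locInt_intervalIntegrable huloc (-t) 0) (locInt_intervalIntegrable huloc 0 t)]
    rw [hGdef]
    simp only
    rw [intervalIntegral.integral_symm]
    ring
  set δ : ℝ := Cd⁻¹^4 with hδdef
  have hδ : 0 < δ := by rw [hδdef]; positivity
  have hgrow : ∀ n : ℕ, (1 + δ)^n * wInt u (Set.Ioo (-1:ℝ) 1) ≤
      wInt u (Set.Ioo (-(2^n : ℝ)) (2^n : ℝ)) := by
    intro n
    induction n with
    | zero => simp
    | succ n ih =>
      have h2n : (0:ℝ) < 2^n := by positivity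
      have hrd := reverse_doubling hupos huloc hCd hd h2n
      calc (1 + δ)^(n+1) * wInt u (Set.Ioo (-1:ℝ) 1)
          = (1 + δ) * ((1 + δ)^n * wInt u (Set.Ioo (-1:ℝ) 1)) := by ring
      _ ≤ (1 + δ) * wInt u (Set.Ioo (-(2^n : ℝ)) (2^n : ℝ)) := by
          apply mul_le_mul_of_nonneg_left ih (by linarith)
      _ ≤ wInt u (Set.Ioo (-(2*2^n : ℝ)) (2*2^n : ℝ)) := hrd
      _ = wInt u (Set.Ioo (-(2^(n+1) : ℝ)) (2^(n+1) : ℝ)) := by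
          norm_num [pow_succ]
          ring_nf
  have h1 : 0 < wInt u (Set.Ioo (-1:ℝ) 1) := wInt_pos hupos huloc (by norm_num)
  obtain ⟨n, hn⟩ := add_one_pow_unbounded_of_pos (v / wInt u (Set.Ioo (-1:ℝ) 1)) hδ
  have hvn : v < wInt u (Set.Ioo (-(2^n : ℝ)) (2^n : ℝ)) := by
    have : v / wInt u (Set.Ioo (-1:ℝ) 1) * wInt u (Set.Ioo (-1:ℝ) 1)
        < (δ + 1)^n * wInt u (Set.Ioo (-1:ℝ) 1) := by
      apply mul_lt_mul_of_pos_right hn h1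
    rw [div_mul_cancel₀ _ h1.ne'] at this
    calc v < (δ + 1)^n * wInt u (Set.Ioo (-1:ℝ) 1) := this
    _ = (1 + δ)^n * wInt u (Set.Ioo (-1:ℝ) 1) := by ring_nf
    _ ≤ _ := hgrow n
  have hIV := intermediate_value_Icc (by positivity : (0:ℝ) ≤ 2^n) hG.continuousOn
  have hvmem : v ∈ Set.Icc (G 0) (G (2^n : ℝ)) := by
    rw [hG0, hGh (2^n : ℝ) (by positivity)]
    exact ⟨hv.le, hvn.le⟩
  obtain ⟨t, htmem, htv⟩ := hIV hvmem
  have htpos : 0 < t := by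
    rcases lt_or_eq_of_le htmem.1 with h | h
    · exact h
    · exfalso
      rw [← h] at htv
      rw [hG0] at htv
      linarith
  exact ⟨t, htpos, by rw [← hGh t htpos.le, htv]⟩

end Surj

section Halving
variable {u : ℝ → ℝ}

lemma halving (huloc : MeasureTheory.LocallyIntegrable u volume) (n : ℕ) :
    ∃ α β : ℝ, 0 ≤ α ∧ α < β ∧ β ≤ 1 ∧ β - α = (1/2:ℝ)^n ∧
      wInt u (Set.Ioo α β) ≤ (1/2:ℝ)^n * wInt u (Set.Ioo 0 1) := by
  induction n with
  | zero => exact ⟨0, 1, le_refl _, by norm_num, le_refl _, by norm_num, by norm_num⟩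
  | succ n ih =>
    obtain ⟨α, β, h0, hαβ, h1, hlen, hint⟩ := ih
    set m := (α + β)/2 with hm
    have hsplit := wInt_split huloc α m β (by rw [hm]; linarith) (by rw [hm]; linarith)
    have hlen2 : m - α = (1/2:ℝ)^(n+1) := by rw [hm, pow_succ, ← hlen]; ring
    have hlen2' : β - m = (1/2:ℝ)^(n+1) := by rw [hm, pow_succ, ← hlen]; ring
    have hhalf : (1/2:ℝ)^(n+1) * wInt u (Set.Ioo 0 1)
        = ((1/2:ℝ)^n * wInt u (Set.Ioo 0 1))/2 := by rw [pow_succ]; ring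
    rcases le_total (wInt u (Set.Ioo α m)) (wInt u (Set.Ioo m β)) with h | h
    · refine ⟨α, m, h0, by rw [hm]; linarith, by rw [hm]; linarith, hlen2, ?_⟩
      rw [hhalf]
      linarith
    · refine ⟨m, β, by rw [hm]; linarith, by rw [hm]; linarith, h1, hlen2', ?_⟩
      rw [hhalf]
      linarith

end Halving


/-- if `p < 1` or `p ≠ r`, no doubling weight `u` makes
`H : L^{p,q}(u) → L^{r,s}(u)` well defined and bounded. -/
theorem no_doubling_weight_offdiagonal (p r : ℝ) (q s : ℝ≥0∞)
    (hp : 0 < p) (hr : 0 < r) (hq : 0 < q) (hs : 0 < s) (hpr : p < 1 ∨ p ≠ r) :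
    ¬ ∃ u : ℝ → ℝ, IsWeight u ∧ DoublingWeight u ∧
      (∀ f : ℝ → ℝ, MemLpq p q u f → ∀ᵐ x : ℝ ∂volume, ∃ L, HasHilbert f x L) ∧
      ∃ C : ℝ, 0 < C ∧ ∀ f : ℝ → ℝ, MemLpq p q u f →
        lpqNorm r s u (hilbert f) ≤ ENNReal.ofReal C * lpqNorm p q u f := by
  rintro ⟨u, ⟨hupos, huloc⟩, ⟨Cd, hCd, hd⟩, -, C, hC, hbd⟩
  obtain ⟨K, hK, hmaster⟩ := master p r q s hp hr hq hs u hupos huloc C hC hbd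
  by_cases hpq : p = r
  · -- then p < 1
    subst hpq
    have hp1 : p < 1 := by
      rcases hpr with h | h
      · exact h
      · exact absurd rfl h
    set UI := wInt u (Set.Ioo (0:ℝ) 1) with hUIdef
    have hUI : 0 < UI := wInt_pos hupos huloc (by norm_num)
    set W := wInt u (Set.Ioo (1:ℝ) 2) with hWdef
    have hW : 0 < W := wInt_pos hupos huloc (by norm_num)
    set δ : ℝ := 1/p - 1 with hδdef
    have hδ : 0 < δ := by
      rw [hδdef]
      have : 1 < 1/p := (lt_div_iff₀ hp).2 (by linarith)
      linarith
    have hKU : 0 < K * UI ^ (1/p) := mul_pos hK (Real.rpow_pos_of_pos hUI _)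
    have key : ∀ n : ℕ, W ^ (1/p) ≤ K * UI ^ (1/p) * ((1/2:ℝ) ^ δ) ^ n := by
      intro n
      obtain ⟨α, β, h0, hαβ, h1, hlen, hint⟩ := halving huloc n
      have hmas := hmaster 0 1 α β h0 hαβ h1
      rw [show (2:ℝ)*1 - 0 = 2 by norm_num] at hmas
      set x : ℝ := (1/2:ℝ)^n with hxdef
      have hx : 0 < x := by rw [hxdef]; positivity
      have hmono : (wInt u (Set.Ioo α β)) ^ (1/p) ≤ (x * UI) ^ (1/p) := by
        apply Real.rpow_le_rpow (wInt_pos hupos huloc hαβ).le _ (by positivity)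
        rw [hxdef]
        exact hint
      have step : x * W ^ (1/p) ≤ K * (x ^ (1/p) * UI ^ (1/p)) := by
        calc x * W ^ (1/p) = (β - α) * W ^ (1/p) := by rw [hlen, hxdef]
        _ ≤ K * (1 - 0) * (wInt u (Set.Ioo α β)) ^ (1/p) := hmas
        _ ≤ K * (1 - 0) * ((x * UI) ^ (1/p)) := by
            apply mul_le_mul_of_nonneg_left hmono (by positivity)
        _ = K * (x ^ (1/p) * UI ^ (1/p)) := by
            rw [Real.mul_rpow hx.le hUI.le]; ring
      have hxsplit : x ^ (1/p) = x * x ^ δ := by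
        rw [show (1/p : ℝ) = 1 + δ by rw [hδdef]; ring, Real.rpow_add hx,
          Real.rpow_one]
      have step2 : x * W ^ (1/p) ≤ x * (K * UI ^ (1/p) * x ^ δ) := by
        calc x * W ^ (1/p) ≤ K * (x ^ (1/p) * UI ^ (1/p)) := step
        _ = x * (K * UI ^ (1/p) * x ^ δ) := by rw [hxsplit]; ring
      have step3 : W ^ (1/p) ≤ K * UI ^ (1/p) * x ^ δ :=
        le_of_mul_le_mul_left step2 hx
      have hxpow : x ^ δ = ((1/2:ℝ) ^ δ) ^ n := by
        rw [hxdef, ← Real.rpow_natCast (1/2:ℝ) n, ← Real.rpow_mul (by norm_num),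
          mul_comm, Real.rpow_mul (by norm_num), Real.rpow_natCast]
      rw [← hxpow]
      exact step3
    obtain ⟨n, hn⟩ := exists_pow_lt_of_lt_one
      (show (0:ℝ) < W ^ (1/p) / (K * UI ^ (1/p)) by positivity)
      (show (1/2:ℝ) ^ δ < 1 from Real.rpow_lt_one (by norm_num) (by norm_num) hδ)
    have := key n
    have hcon : K * UI ^ (1/p) * ((1/2:ℝ) ^ δ) ^ n < W ^ (1/p) := by
      calc K * UI ^ (1/p) * ((1/2:ℝ) ^ δ) ^ n
          < K * UI ^ (1/p) * (W ^ (1/p) / (K * UI ^ (1/p))) := by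
            apply mul_lt_mul_of_pos_left hn hKU
      _ = W ^ (1/p) := by field_simp
    linarith
  · -- p ≠ r
    set K₂ : ℝ := K * (Cd^2) ^ (1/p) with hK₂def
    have hK₂ : 0 < K₂ := mul_pos hK (Real.rpow_pos_of_pos (by positivity) _)
    have key : ∀ v : ℝ, 0 < v → v ^ (1/r) ≤ K₂ * v ^ (1/p) := by
      intro v hv
      obtain ⟨t, ht, hteq⟩ := exists_symm_interval hupos huloc hCd hd v hv
      have hmas := hmaster (-(3*t)) (-t) (-(3*t)) (-t) (le_refl _) (by linarith) (le_refl _)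
      rw [show 2*(-t) - -(3*t) = t by ring] at hmas
      have hdc := doubling_compare hupos huloc hCd hd (show -(3*t) < -t by linarith)
      rw [show 2*(-t) - -(3*t) = t by ring] at hdc
      have h2t : (0:ℝ) < -t - -(3*t) := by linarith
      have hcancel : (wInt u (Set.Ioo (-t) t)) ^ (1/r)
          ≤ K * (wInt u (Set.Ioo (-(3*t)) (-t))) ^ (1/p) := by
        have := hmas
        rw [show K * (-t - -(3*t)) * wInt u (Set.Ioo (-(3*t)) (-t)) ^ (1/p)
            = (-t - -(3*t)) * (K * wInt u (Set.Ioo (-(3*t)) (-t)) ^ (1/p)) by ring] at this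
        exact le_of_mul_le_mul_left this h2t
      have hfin : (wInt u (Set.Ioo (-t) t)) ^ (1/r)
          ≤ K * (Cd^2 * wInt u (Set.Ioo (-t) t)) ^ (1/p) := by
        apply le_trans hcancel
        apply mul_le_mul_of_nonneg_left _ hK.le
        apply Real.rpow_le_rpow (wInt_pos hupos huloc (by linarith)).le hdc (by positivity)
      rw [hteq] at hfin
      calc v ^ (1/r) ≤ K * (Cd^2 * v) ^ (1/p) := hfin
      _ = K₂ * v ^ (1/p) := by
          rw [hK₂def, Real.mul_rpow (by positivity) hv.le]; ring
    set e : ℝ := 1/r - 1/p with hedef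
    have he : e ≠ 0 := by
      rw [hedef]
      intro h
      apply hpq
      have : 1/r = 1/p := by linarith
      field_simp at this
      linarith
    have hve : ∀ v : ℝ, 0 < v → v ^ e ≤ K₂ := by
      intro v hv
      have h1 := key v hv
      have h2 : v ^ (1/r) = v ^ (1/p) * v ^ e := by
        rw [← Real.rpow_add hv, show 1/p + e = 1/r by rw [hedef]; ring]
      rw [h2, mul_comm K₂ (v ^ (1/p))] at h1
      exact le_of_mul_le_mul_left h1 (Real.rpow_pos_of_pos hv (1/p))
    have hcon := hve ((K₂ + 1) ^ (1/e)) (Real.rpow_pos_of_pos (by linarith) _)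
    rw [← Real.rpow_mul (by linarith), one_div_mul_cancel he, Real.rpow_one] at hcon
    linarith
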